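/- For Hermitian matrices X_1,...,X_d and any ε ≥ 0, the quadratic ε-pseudospectrum is bounded: if λ ∈ QΛ_ε(X_1,...,X_d) then ‖λ‖² ≤ (ε + sqrt(Σ_j ‖X_j‖²))², where ‖X_j‖ is the operator norm. -/

import Mathlib

open Matrix

noncomputable section

/-- The quadratic-mean eigen-error `sqrt (∑ j ‖X_j v − λ_j v‖²)`. -/
def quadErr {n d : ℕ} (X : Fin d → Matrix (Fin n) (Fin n) ℂ) (lam : Fin d → ℝ)
    (v : EuclideanSpace ℂ (Fin n)) : ℝ :=
  Real.sqrt (∑ j, ‖Matrix.toEuclideanLin (X j) v - (lam j : ℂ) • v‖ ^ 2)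

/-- `μ_λ^Q`, the infimum of the quadratic-mean eigen-error over unit vectors. -/
def muQ {n d : ℕ} (X : Fin d → Matrix (Fin n) (Fin n) ℂ) (lam : Fin d → ℝ) : ℝ :=
  ⨅ v : {v : EuclideanSpace ℂ (Fin n) // ‖v‖ = 1}, quadErr X lam v

/-- The quadratic ε-pseudospectrum `QΛ_ε`. -/
def quadPseudospectrum {n d : ℕ} (X : Fin d → Matrix (Fin n) (Fin n) ℂ) (ε : ℝ) :
    Set (Fin d → ℝ) :=
  {lam | ∃ v : EuclideanSpace ℂ (Fin n), ‖v‖ = 1 ∧ quadErr X lam v ≤ ε}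

/-- The block column matrix `M_λ` stacking the blocks `X_j − λ_j I`. -/
def Mlam {n d : ℕ} (X : Fin d → Matrix (Fin n) (Fin n) ℂ) (lam : Fin d → ℝ) :
    Matrix (Fin d × Fin n) (Fin n) ℂ :=
  fun p k => (X p.1 - (lam p.1 : ℂ) • (1 : Matrix (Fin n) (Fin n) ℂ)) p.2 k

/-- `Q_λ = ∑_j (X_j − λ_j I)²`. -/
def Qlam {n d : ℕ} (X : Fin d → Matrix (Fin n) (Fin n) ℂ) (lam : Fin d → ℝ) :
    Matrix (Fin n) (Fin n) ℂ :=
  ∑ j, (X j - (lam j : ℂ) • (1 : Matrix (Fin n) (Fin n) ℂ)) ^ 2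

/-- The smallest singular value of a rectangular matrix, as the square root of the
smallest eigenvalue of `MᴴM`. -/
def sigmaMin {m : Type*} [Fintype m] {n : ℕ} (M : Matrix m (Fin n) ℂ) : ℝ :=
  Real.sqrt (⨅ i : Fin n, (Matrix.isHermitian_conjTranspose_mul_self M).eigenvalues i)

set_option synthInstance.maxHeartbeats 800000 in
theorem quadPseudospectrum_bounded {n d : ℕ} (hn : 0 < n)
    (X : Fin d → Matrix (Fin n) (Fin n) ℂ) (hX : ∀ j, (X j).IsHermitian)
    (ε : ℝ) (hε : 0 ≤ ε) (lam : EuclideanSpace ℝ (Fin d))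
    (hlam : ∃ v : EuclideanSpace ℂ (Fin n), ‖v‖ = 1 ∧ quadErr X lam v ≤ ε) :
    ‖lam‖ ^ 2 ≤
      (ε + Real.sqrt (∑ j, ‖Matrix.toEuclideanCLM (𝕜 := ℂ) (X j)‖ ^ 2)) ^ 2 := by
  obtain ⟨v, hv, hq⟩ := hlam
  set W : PiLp 2 (fun _ : Fin d => EuclideanSpace ℂ (Fin n)) :=
    WithLp.toLp 2 (fun j => (lam j : ℂ) • v) with hW
  set U : PiLp 2 (fun _ : Fin d => EuclideanSpace ℂ (Fin n)) :=
    WithLp.toLp 2 (fun j => Matrix.toEuclideanLin (X j) v) with hU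
  have hWnorm : ‖W‖ = ‖lam‖ := by
    have h1 : ‖W‖ ^ 2 = ‖lam‖ ^ 2 := by
      rw [PiLp.norm_sq_eq_of_L2, EuclideanSpace.norm_eq, Real.sq_sqrt
        (Finset.sum_nonneg fun j _ => sq_nonneg _)]
      refine Finset.sum_congr rfl fun j _ => ?_
      simp [hW, norm_smul, hv, Complex.norm_real, sq_abs]
    have := congrArg Real.sqrt h1
    rwa [Real.sqrt_sq (norm_nonneg _), Real.sqrt_sq (norm_nonneg _)] at this
  have hUW : ‖U - W‖ = quadErr X lam v := by
    have h1 : ‖U - W‖ ^ 2 = ∑ j, ‖Matrix.toEuclideanLin (X j) v - (lam j : ℂ) • v‖ ^ 2 := by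
      rw [PiLp.norm_sq_eq_of_L2]
      rfl
    rw [quadErr, ← h1, Real.sqrt_sq (norm_nonneg _)]
  have hUnorm : ‖U‖ ≤ Real.sqrt (∑ j, ‖Matrix.toEuclideanCLM (𝕜 := ℂ) (X j)‖ ^ 2) := by
    rw [show ‖U‖ = Real.sqrt (‖U‖ ^ 2) from (Real.sqrt_sq (norm_nonneg _)).symm]
    apply Real.sqrt_le_sqrt
    rw [PiLp.norm_sq_eq_of_L2]
    refine Finset.sum_le_sum fun j _ => ?_
    have : ‖U j‖ ≤ ‖Matrix.toEuclideanCLM (𝕜 := ℂ) (X j)‖ * ‖v‖ := by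
      have := (Matrix.toEuclideanCLM (𝕜 := ℂ) (X j)).le_opNorm v
      exact this
    rw [hv, mul_one] at this
    exact pow_le_pow_left₀ (norm_nonneg _) this 2
  have key : ‖lam‖ ≤ ε + Real.sqrt (∑ j, ‖Matrix.toEuclideanCLM (𝕜 := ℂ) (X j)‖ ^ 2) := by
    calc ‖lam‖ = ‖W‖ := hWnorm.symm
    _ = ‖(W - U) + U‖ := by rw [sub_add_cancel]
    _ ≤ ‖W - U‖ + ‖U‖ := norm_add_le _ _
    _ = ‖U - W‖ + ‖U‖ := by rw [norm_sub_rev]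
    _ ≤ ε + Real.sqrt (∑ j, ‖Matrix.toEuclideanCLM (𝕜 := ℂ) (X j)‖ ^ 2) := by
        rw [hUW]; exact add_le_add hq hUnorm
  exact pow_le_pow_left₀ (norm_nonneg _) key 2
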